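/- Let p and n be positive integers with p + n even. Then the alternating harmonic number of order p satisfies H̄_n^{(p)} = ((n+1)/2) · ∑_{j=1}^{p} (-1)^j ∑_{ℓ=1}^{n} (-1)^{n+1-ℓ} / (ℓ^j (n+1-ℓ)^{p+1-j}). -/

import Mathlib

open Real Filter Finset

noncomputable def Li (m : ℕ) (x : ℝ) : ℝ := ∑' n : ℕ, x ^ (n + 1) / (n + 1 : ℝ) ^ m

noncomputable def H (p n : ℕ) : ℝ := ∑ j ∈ Finset.Icc 1 n, 1 / (j : ℝ) ^ p

noncomputable def Hbar (p n : ℕ) : ℝ := ∑ j ∈ Finset.Icc 1 n, (-1 : ℝ) ^ (j - 1) / (j : ℝ) ^ p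

lemma geom_pf (a b : ℝ) (ha : a ≠ 0) (hb : b ≠ 0) (hab : a + b ≠ 0) (p : ℕ) (hp : 1 ≤ p) :
    ∑ j ∈ Finset.Icc 1 p, (-1:ℝ)^j / (a^j * b^(p+1-j))
      = ((-1)^p/a^p - 1/b^p)/(a+b) := by
  induction p, hp using Nat.le_induction with
  | base =>
    simp only [Finset.Icc_self, Finset.sum_singleton]
    field_simp
    ring
  | succ p hp ih =>
    rw [Finset.sum_Icc_succ_top (by omega : 1 ≤ p+1)]
    have h1 : ∀ j ∈ Finset.Icc 1 p, (-1:ℝ)^j / (a^j * b^(p+1+1-j))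
        = ((-1:ℝ)^j / (a^j * b^(p+1-j))) / b := by
      intro j hj
      simp only [Finset.mem_Icc] at hj
      have h : p+1+1-j = (p+1-j)+1 := by omega
      rw [h, pow_succ]
      field_simp
    rw [Finset.sum_congr rfl h1, ← Finset.sum_div, ih]
    have h2 : p+1+1-(p+1) = 1 := by omega
    rw [h2]
    have hap : a^p ≠ 0 := pow_ne_zero _ ha
    have hbp : b^p ≠ 0 := pow_ne_zero _ hb
    field_simp
    ring

theorem stmt4 (p n : ℕ) (hp : 1 ≤ p) (hn : 1 ≤ n) (heven : Even (p + n)) :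
    Hbar p n = (((n : ℝ) + 1) / 2) *
      ∑ j ∈ Finset.Icc 1 p, (-1 : ℝ) ^ j *
        ∑ l ∈ Finset.Icc 1 n, (-1 : ℝ) ^ (n + 1 - l) /
          ((l : ℝ) ^ j * ((n : ℝ) + 1 - l) ^ (p + 1 - j)) := by
  have hm : ((n:ℝ)+1) ≠ 0 := by positivity
  have hswap : ∑ j ∈ Finset.Icc 1 p, (-1 : ℝ) ^ j *
        ∑ l ∈ Finset.Icc 1 n, (-1 : ℝ) ^ (n + 1 - l) /
          ((l : ℝ) ^ j * ((n : ℝ) + 1 - l) ^ (p + 1 - j))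
      = ∑ l ∈ Finset.Icc 1 n, (-1:ℝ)^(n+1-l) *
          ∑ j ∈ Finset.Icc 1 p, (-1:ℝ)^j / ((l : ℝ) ^ j * ((n : ℝ) + 1 - l) ^ (p + 1 - j)) := by
    simp_rw [Finset.mul_sum]
    rw [Finset.sum_comm]
    apply Finset.sum_congr rfl
    intro l _
    apply Finset.sum_congr rfl
    intro j _
    ring
  rw [hswap]
  have hinner : ∀ l ∈ Finset.Icc 1 n,
      (-1:ℝ)^(n+1-l) * ∑ j ∈ Finset.Icc 1 p, (-1:ℝ)^j / ((l : ℝ) ^ j * ((n : ℝ) + 1 - l) ^ (p + 1 - j))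
      = (-1:ℝ)^(n+1-l) * (((-1)^p/(l:ℝ)^p - 1/((n:ℝ)+1-l)^p)/((n:ℝ)+1)) := by
    intro l hl
    simp only [Finset.mem_Icc] at hl
    have hl1 : (1:ℝ) ≤ (l:ℝ) := by exact_mod_cast hl.1
    have hln : (l:ℝ) ≤ (n:ℝ) := by exact_mod_cast hl.2
    have ha : (l:ℝ) ≠ 0 := by linarith
    have hb : ((n:ℝ)+1-(l:ℝ)) ≠ 0 := by linarith
    have hab : (l:ℝ) + ((n:ℝ)+1-(l:ℝ)) ≠ 0 := by linarith
    rw [geom_pf _ _ ha hb hab p hp]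
    congr 2
    ring
  rw [Finset.sum_congr rfl hinner]
  have hsum : ∑ l ∈ Finset.Icc 1 n, (-1:ℝ)^(n+1-l) * (((-1)^p/(l:ℝ)^p - 1/((n:ℝ)+1-l)^p)/((n:ℝ)+1))
      = ((∑ l ∈ Finset.Icc 1 n, (-1:ℝ)^(n+1-l) * (-1)^p/(l:ℝ)^p)
        - (∑ l ∈ Finset.Icc 1 n, (-1:ℝ)^(n+1-l)/((n:ℝ)+1-l)^p)) / ((n:ℝ)+1) := by
    rw [← Finset.sum_sub_distrib, Finset.sum_div]
    apply Finset.sum_congr rfl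
    intro l _
    ring
  rw [hsum]
  have hfirst : ∑ l ∈ Finset.Icc 1 n, (-1:ℝ)^(n+1-l) * (-1)^p/(l:ℝ)^p = Hbar p n := by
    apply Finset.sum_congr rfl
    intro l hl
    simp only [Finset.mem_Icc] at hl
    congr 1
    set A : ℝ := (-1)^(n+1-l)
    set B : ℝ := (-1)^p
    set C : ℝ := (-1)^(l-1)
    set D : ℝ := (-1)^n
    have h1 : A * C = D := by rw [← pow_add]; congr 1; omega
    have h2 : B * D = 1 := by rw [← pow_add, Even.neg_one_pow heven]
    have h3 : C * C = 1 := by rw [← pow_add, Even.neg_one_pow ⟨l-1, rfl⟩]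
    show A * B = C
    linear_combination C*B*h1 + C*h2 - A*B*h3
  have hsecond : ∑ l ∈ Finset.Icc 1 n, (-1:ℝ)^(n+1-l)/((n:ℝ)+1-l)^p = - Hbar p n := by
    rw [show - Hbar p n = ∑ l ∈ Finset.Icc 1 n, -((-1:ℝ)^(l-1)/(l:ℝ)^p) from by
      rw [Hbar, ← Finset.sum_neg_distrib]]
    apply Finset.sum_nbij' (fun l => n+1-l) (fun l => n+1-l)
    · intro l hl; simp only [Finset.mem_Icc] at *; omega
    · intro l hl; simp only [Finset.mem_Icc] at *; omega
    · intro l hl; simp only [Finset.mem_Icc] at *; omega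
    · intro l hl; simp only [Finset.mem_Icc] at *; omega
    · intro l hl
      simp only [Finset.mem_Icc] at hl
      have e1 : n+1-(n+1-l) = l := by omega
      have e2 : ((n+1-l : ℕ) : ℝ) = (n:ℝ)+1-(l:ℝ) := by
        have : l ≤ n+1 := by omega
        push_cast [Nat.cast_sub this]
        ring
      have e4 : (-1:ℝ)^(n+1-l) = -(-1:ℝ)^(n+1-l-1) := by
        obtain ⟨k, hk⟩ : ∃ k, n+1-l = k+1 := ⟨n-l, by omega⟩
        rw [hk, Nat.add_sub_cancel, pow_succ]; ring
      rw [e2]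
      conv_lhs => rw [e4]
      ring
  rw [hfirst, hsecond]
  field_simp
  ring
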